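/- Let x, y, z, u : ℂ → ℂ be differentiable and satisfy x' = (u + y² + z²)x, y' = (u + y² - 2z²)y, z' = (u - 2y² + z²)z, u' = u² - y⁴ + y²z² - z⁴. Then at every point where x ≠ 0, the function (y² - z²)/x² has vanishing derivative (it is a first integral). -/

import Mathlib

open Complex

/-- System (19): `(y² - z²)/x²` is a first integral where `x ≠ 0`. -/
theorem system19_integral (x y z u : ℂ → ℂ)
    (hx : Differentiable ℂ x) (hy : Differentiable ℂ y)
    (hz : Differentiable ℂ z) (hu : Differentiable ℂ u)
    (hdx : ∀ τ, deriv x τ = (u τ + (y τ) ^ 2 + (z τ) ^ 2) * x τ)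
    (hdy : ∀ τ, deriv y τ = (u τ + (y τ) ^ 2 - 2 * (z τ) ^ 2) * y τ)
    (hdz : ∀ τ, deriv z τ = (u τ - 2 * (y τ) ^ 2 + (z τ) ^ 2) * z τ)
    (hdu : ∀ τ, deriv u τ = (u τ) ^ 2 - (y τ) ^ 4 + (y τ) ^ 2 * (z τ) ^ 2 - (z τ) ^ 4) :
    ∀ τ, x τ ≠ 0 →
      deriv (fun τ => ((y τ) ^ 2 - (z τ) ^ 2) / (x τ) ^ 2) τ = 0 := by
  intro τ hxne
  have hx2 : (x τ) ^ 2 ≠ 0 := pow_ne_zero _ hxne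
  have hN : HasDerivAt (fun τ => (y τ) ^ 2 - (z τ) ^ 2)
      ((2 : ℕ) * y τ ^ 1 * deriv y τ - (2 : ℕ) * z τ ^ 1 * deriv z τ) τ :=
    (((hy τ).hasDerivAt.pow 2).sub ((hz τ).hasDerivAt.pow 2))
  have hD : HasDerivAt (fun τ => (x τ) ^ 2) ((2 : ℕ) * x τ ^ 1 * deriv x τ) τ :=
    (hx τ).hasDerivAt.pow 2
  have : deriv (fun τ => ((y τ) ^ 2 - (z τ) ^ 2) / (x τ) ^ 2) τ = _ := (hN.div hD hx2).deriv
  rw [this, hdx, hdy, hdz]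
  field_simp
  ring
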